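/- For each integer n ≥ 1, let Hₙ := {(x₁, x₂) ∈ ℝ² : −1/2 ≤ x₂ ≤ 1/2 and 0 ≤ x₁ ≤ 1/n + 1 − 2x₂}. Then: (i) each Hₙ is a Delzant polygon; (ii) the sequence (Hₙ) is Cauchy for d, i.e., λ(H_m Δ H_n) → 0 as m, n → ∞; (iii) there is no Delzant polygon Δ with λ(Hₙ Δ Δ) → 0. In particular, the space of Delzant polygons with the metric d is not complete. -/

import Mathlib

open MeasureTheory Set Metric Filter

noncomputable section

abbrev Plane := EuclideanSpace ℝ (Fin 2)

/-- The real vector in the plane determined by an integer vector. -/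
def vec (u : Fin 2 → ℤ) : Plane := WithLp.toLp 2 (fun i => (u i : ℝ))

/-- A Delzant polygon: compact, convex, of positive Lebesgue measure, and at every
extreme point the polygon locally coincides with a cone spanned by a `ℤ`-basis of `ℤ²`. -/
def IsDelzant (Δ : Set Plane) : Prop :=
  IsCompact Δ ∧ Convex ℝ Δ ∧ 0 < volume Δ ∧
  ∀ v ∈ Δ.extremePoints ℝ, ∃ u₁ u₂ : Fin 2 → ℤ,
    LinearIndependent ℝ ![vec u₁, vec u₂] ∧
    (u₁ 0 * u₂ 1 - u₁ 1 * u₂ 0 = 1 ∨ u₁ 0 * u₂ 1 - u₁ 1 * u₂ 0 = -1) ∧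
    ∃ ε > (0:ℝ), Δ ∩ closedBall v ε =
      {x : Plane | ∃ t₁ t₂ : ℝ, 0 ≤ t₁ ∧ 0 ≤ t₂ ∧ x = v + t₁ • vec u₁ + t₂ • vec u₂}
        ∩ closedBall v ε

/-- The Hirzebruch trapezoid $H_n = H_{1/n + 1, 1, 2}$ (height 1, slanted edge of slope
$-1/2$, top edge of length $1/n$). -/
def Htrap (n : ℕ) : Set Plane :=
  {x : Plane | -(1/2) ≤ x 1 ∧ x 1 ≤ 1/2 ∧ 0 ≤ x 0 ∧ x 0 ≤ 1/(n:ℝ) + 1 - 2 * x 1}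

def pt (a b : ℝ) : Plane := WithLp.toLp 2 ![a, b]
def H (r : ℝ) : Set Plane :=
  {x : Plane | -(1/2) ≤ x 1 ∧ x 1 ≤ 1/2 ∧ 0 ≤ x 0 ∧ x 0 ≤ r + 1 - 2 * x 1}

lemma plane_eq {x y : Plane} (h0 : x 0 = y 0) (h1 : x 1 = y 1) : x = y := by
  ext i; fin_cases i; exacts [h0, h1]

lemma comb_apply (v : Plane) (t₁ t₂ : ℝ) (u₁ u₂ : Fin 2 → ℤ) (i : Fin 2) :
    (v + t₁ • vec u₁ + t₂ • vec u₂) i = v i + t₁ * (u₁ i : ℝ) + t₂ * (u₂ i : ℝ) := rfl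

lemma not_extreme {S : Set Plane} {v d : Plane} (h1 : v + d ∈ S) (h2 : v - d ∈ S)
    (hv : v ∈ S.extremePoints ℝ) : d = 0 := by
  rw [mem_extremePoints] at hv
  have hseg : v ∈ openSegment ℝ (v - d) (v + d) :=
    ⟨1/2, 1/2, by norm_num, by norm_num, by norm_num, by module⟩
  have h := (hv.2 _ h2 _ h1 hseg).2
  exact add_eq_left.mp h

lemma extreme_classify {r : ℝ} (hr0 : 0 < r) {v : Plane}
    (hv : v ∈ (H r).extremePoints ℝ) :
    (v 0 = 0 ∧ v 1 = -(1/2)) ∨ (v 0 = 0 ∧ v 1 = 1/2) ∨ (v 0 = r ∧ v 1 = 1/2) ∨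
      (v 0 = r + 2 ∧ v 1 = -(1/2)) := by
  obtain ⟨h1, h2, h3, h4⟩ := hv.1
  rcases eq_or_lt_of_le h3 with ha | ha
  · -- v 0 = 0
    rcases eq_or_lt_of_le h1 with hb | hb
    · exact Or.inl ⟨ha.symm, hb.symm⟩
    rcases eq_or_lt_of_le h2 with hb2 | hb2
    · exact Or.inr (Or.inl ⟨ha.symm, hb2⟩)
    · exfalso
      set δ := min (1/2 - v 1) (v 1 + 1/2) with hδ
      have hδ0 : 0 < δ := lt_min (by linarith) (by linarith)
      have l1 := min_le_left (1/2 - v 1) (v 1 + 1/2)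
      have l2 := min_le_right (1/2 - v 1) (v 1 + 1/2)
      have m1 : v + pt 0 δ ∈ H r := by
        refine ⟨show -(1/2) ≤ v 1 + δ by linarith, show v 1 + δ ≤ 1/2 by linarith,
          show (0:ℝ) ≤ v 0 + 0 by linarith, show v 0 + 0 ≤ r + 1 - 2 * (v 1 + δ) by nlinarith⟩
      have m2 : v - pt 0 δ ∈ H r := by
        refine ⟨show -(1/2) ≤ v 1 - δ by linarith, show v 1 - δ ≤ 1/2 by linarith,
          show (0:ℝ) ≤ v 0 - 0 by linarith, show v 0 - 0 ≤ r + 1 - 2 * (v 1 - δ) by nlinarith⟩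
      have := not_extreme m1 m2 hv
      have : pt 0 δ 1 = (0 : Plane) 1 := by rw [this]
      have : δ = 0 := this
      linarith
  · rcases eq_or_lt_of_le h4 with h4e | h4l
    · -- slant tight
      rcases eq_or_lt_of_le h1 with hb | hb
      · exact Or.inr (Or.inr (Or.inr ⟨by rw [h4e, ← hb]; ring, hb.symm⟩))
      rcases eq_or_lt_of_le h2 with hb2 | hb2
      · exact Or.inr (Or.inr (Or.inl ⟨by rw [h4e, hb2]; ring, hb2⟩))
      · exfalso
        set δ := min (min (v 1 + 1/2) (1/2 - v 1)) (v 0 / 2) with hδ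
        have hδ0 : 0 < δ := lt_min (lt_min (by linarith) (by linarith)) (by linarith)
        have l1 := le_trans (min_le_left _ (v 0 / 2)) (min_le_left (v 1 + 1/2) (1/2 - v 1))
        have l2 := le_trans (min_le_left _ (v 0 / 2)) (min_le_right (v 1 + 1/2) (1/2 - v 1))
        have l3 := min_le_right (min (v 1 + 1/2) (1/2 - v 1)) (v 0 / 2)
        have m1 : v + pt (2*δ) (-δ) ∈ H r := by
          refine ⟨show -(1/2) ≤ v 1 + -δ by linarith, show v 1 + -δ ≤ 1/2 by linarith,
            show (0:ℝ) ≤ v 0 + 2*δ by linarith,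
            show v 0 + 2*δ ≤ r + 1 - 2 * (v 1 + -δ) by rw [h4e]; ring_nf; linarith⟩
        have m2 : v - pt (2*δ) (-δ) ∈ H r := by
          refine ⟨show -(1/2) ≤ v 1 - -δ by linarith, show v 1 - -δ ≤ 1/2 by linarith,
            show (0:ℝ) ≤ v 0 - 2*δ by linarith,
            show v 0 - 2*δ ≤ r + 1 - 2 * (v 1 - -δ) by rw [h4e]; ring_nf; linarith⟩
        have := not_extreme m1 m2 hv
        have : pt (2*δ) (-δ) 1 = (0 : Plane) 1 := by rw [this]
        have : -δ = (0:ℝ) := this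
        linarith
    · exfalso
      set δ := min (v 0) (r + 1 - 2 * v 1 - v 0) with hδ
      have hδ0 : 0 < δ := lt_min (by linarith) (by linarith)
      have l1 := min_le_left (v 0) (r + 1 - 2 * v 1 - v 0)
      have l2 := min_le_right (v 0) (r + 1 - 2 * v 1 - v 0)
      have m1 : v + pt δ 0 ∈ H r := by
        refine ⟨show -(1/2) ≤ v 1 + 0 by linarith, show v 1 + 0 ≤ 1/2 by linarith,
          show (0:ℝ) ≤ v 0 + δ by linarith,
          show v 0 + δ ≤ r + 1 - 2 * (v 1 + 0) by linarith⟩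
      have m2 : v - pt δ 0 ∈ H r := by
        refine ⟨show -(1/2) ≤ v 1 - 0 by linarith, show v 1 - 0 ≤ 1/2 by linarith,
          show (0:ℝ) ≤ v 0 - δ by linarith,
          show v 0 - δ ≤ r + 1 - 2 * (v 1 - 0) by linarith⟩
      have := not_extreme m1 m2 hv
      have : pt δ 0 0 = (0 : Plane) 0 := by rw [this]
      have : δ = 0 := this
      linarith

lemma Htrap_eq (n : ℕ) : Htrap n = H (1/(n:ℝ)) := rfl

lemma H_closed (r : ℝ) : IsClosed (H r) := by
  have c0 : Continuous (fun x : Plane => x 0) := PiLp.continuous_apply 2 _ 0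
  have c1 : Continuous (fun x : Plane => x 1) := PiLp.continuous_apply 2 _ 1
  exact ((isClosed_le continuous_const c1).inter ((isClosed_le c1 continuous_const).inter
    ((isClosed_le continuous_const c0).inter
    (isClosed_le c0 (by continuity)))))

lemma H_convex (r : ℝ) : Convex ℝ (H r) := by
  intro x hx y hy a b ha hb hab
  obtain ⟨h1, h2, h3, h4⟩ := hx
  obtain ⟨k1, k2, k3, k4⟩ := hy
  have e0 : (a • x + b • y) 0 = a * x 0 + b * y 0 := rfl
  have e1 : (a • x + b • y) 1 = a * x 1 + b * y 1 := rfl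
  exact ⟨by rw [e1]; nlinarith, by rw [e1]; nlinarith, by rw [e0]; nlinarith,
    by rw [e0, e1]; nlinarith⟩

def U : Set Plane := {x | x 0 ∈ Ioo (0:ℝ) 1 ∧ x 1 ∈ Ioo (-(1/2):ℝ) 0}

lemma U_open : IsOpen U :=
  ((isOpen_Ioo.preimage (PiLp.continuous_apply 2 _ 0)).inter (isOpen_Ioo.preimage (PiLp.continuous_apply 2 _ 1)))

lemma U_sub {r : ℝ} (hr : 0 ≤ r) : U ⊆ H r := by
  rintro x ⟨⟨h1, h2⟩, h3, h4⟩
  exact ⟨by linarith, by linarith, by linarith, by linarith⟩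

lemma U_nonempty : U.Nonempty := ⟨pt (1/2) (-(1/4)), by constructor <;> constructor <;> norm_num [pt]⟩

lemma H_vol_pos {r : ℝ} (hr : 0 ≤ r) : 0 < volume (H r) :=
  lt_of_lt_of_le (U_open.measure_pos volume U_nonempty) (measure_mono (U_sub hr))

def T : Plane → ℝ × ℝ := fun x => (x 1, x 0)
lemma T_mp : MeasurePreserving T := by
  have h1 := EuclideanSpace.volume_preserving_symm_measurableEquiv_toLp (Fin 2)
  have h2 := MeasureTheory.volume_preserving_finTwoArrow ℝ
  have h3 : MeasurePreserving (Prod.swap : ℝ×ℝ → ℝ×ℝ) := by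
    rw [Measure.volume_eq_prod]; exact Measure.measurePreserving_swap
  exact h3.comp (h2.comp h1)
def Reg (c C : ℝ) : Set (ℝ × ℝ) :=
  {p | p.1 ∈ Icc (-(1/2):ℝ) (1/2) ∧ p.2 ∈ Ioc (c + 1 - 2*p.1) (C + 1 - 2*p.1)}
lemma Reg_meas (c C : ℝ) : MeasurableSet (Reg c C) := by
  apply MeasurableSet.inter
  · exact (measurable_fst.comp measurable_id) measurableSet_Icc
  · apply MeasurableSet.inter
    · exact measurableSet_lt (f := fun p : ℝ × ℝ => c + 1 - 2*p.1) (g := fun p => p.2) (by fun_prop) (by fun_prop)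
    · exact measurableSet_le (f := fun p : ℝ × ℝ => p.2) (g := fun p => C + 1 - 2*p.1) (by fun_prop) (by fun_prop)
lemma Reg_vol (c C : ℝ) : volume (Reg c C) = ENNReal.ofReal (C - c) := by
  rw [Measure.volume_eq_prod, Measure.prod_apply (Reg_meas c C)]
  have : (fun x => volume (Prod.mk x ⁻¹' Reg c C))
      = (Icc (-(1/2):ℝ) (1/2)).indicator (fun _ => ENNReal.ofReal (C - c)) := by
    funext x
    by_cases hx : x ∈ Icc (-(1/2):ℝ) (1/2)
    · have : Prod.mk x ⁻¹' Reg c C = Ioc (c + 1 - 2*x) (C + 1 - 2*x) := by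
        ext y; simp only [Reg, mem_setOf_eq, mem_Ioc, mem_preimage]; tauto
      rw [this, Real.volume_Ioc, indicator_of_mem hx]
      ring_nf
    · have : Prod.mk x ⁻¹' Reg c C = ∅ := by
        ext y; simp only [Reg, mem_setOf_eq, mem_preimage, mem_empty_iff_false, iff_false]; tauto
      rw [this, indicator_of_notMem hx]; simp
  rw [this]
  rw [lintegral_indicator measurableSet_Icc]
  simp [Real.volume_Icc]
  norm_num

lemma symmDiff_sub {m n : ℕ} (h : 1/(n:ℝ) ≤ 1/(m:ℝ)) :
    symmDiff (Htrap m) (Htrap n) ⊆ T ⁻¹' Reg (1/(n:ℝ)) (1/(m:ℝ)) := by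
  intro x hx
  rw [Set.mem_symmDiff] at hx
  have key : ∀ (hm : x ∈ Htrap m) (hn : x ∉ Htrap n), x ∈ T ⁻¹' Reg (1/(n:ℝ)) (1/(m:ℝ)) := by
    intro hm hn
    obtain ⟨h1, h2, h3, h4⟩ := hm
    have h5 : ¬ (x 0 ≤ 1/(n:ℝ) + 1 - 2 * x 1) := fun hc => hn ⟨h1, h2, h3, hc⟩
    push_neg at h5
    exact ⟨⟨h1, h2⟩, h5, h4⟩
  rcases hx with ⟨hm, hn⟩ | ⟨hn, hm⟩
  · exact key hm hn
  · -- x ∈ Htrap n, x ∉ Htrap m, but 1/n ≤ 1/m means Htrap n ⊆ Htrap m : contradiction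
    obtain ⟨h1, h2, h3, h4⟩ := hn
    exact absurd ⟨h1, h2, h3, by linarith⟩ hm

lemma vol_symmDiff_le (m n : ℕ) (h : 1/(n:ℝ) ≤ 1/(m:ℝ)) :
    volume (symmDiff (Htrap m) (Htrap n)) ≤ ENNReal.ofReal (1/(m:ℝ) - 1/(n:ℝ)) := by
  calc volume (symmDiff (Htrap m) (Htrap n)) ≤ volume (T ⁻¹' Reg (1/(n:ℝ)) (1/(m:ℝ))) :=
        measure_mono (symmDiff_sub h)
    _ = volume (Reg (1/(n:ℝ)) (1/(m:ℝ))) := T_mp.measure_preimage (Reg_meas _ _).nullMeasurableSet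
    _ = ENNReal.ofReal (1/(m:ℝ) - 1/(n:ℝ)) := Reg_vol _ _

lemma coord_abs_le (x : Plane) (i : Fin 2) : |x i| ≤ ‖x‖ := by
  rw [EuclideanSpace.norm_eq]
  rw [show |x i| = Real.sqrt (‖x i‖^2) by rw [Real.sqrt_sq_eq_abs]; simp]
  apply Real.sqrt_le_sqrt
  exact Finset.single_le_sum (f := fun j => ‖x j‖^2) (fun j _ => sq_nonneg _) (Finset.mem_univ i)

lemma coord_dist (x v : Plane) (i : Fin 2) : |x i - v i| ≤ dist x v := by
  rw [dist_eq_norm]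
  exact coord_abs_le (x - v) i

lemma norm_le_coords (x : Plane) : ‖x‖ ≤ |x 0| + |x 1| := by
  rw [EuclideanSpace.norm_eq]
  rw [show ∑ i, ‖x i‖^2 = ‖x 0‖^2 + ‖x 1‖^2 from Fin.sum_univ_two _]
  have h : ‖x 0‖^2 + ‖x 1‖^2 ≤ (|x 0| + |x 1|)^2 := by
    simp only [Real.norm_eq_abs]
    nlinarith [abs_nonneg (x 0), abs_nonneg (x 1)]
  calc Real.sqrt (‖x 0‖^2 + ‖x 1‖^2) ≤ Real.sqrt ((|x 0| + |x 1|)^2) := Real.sqrt_le_sqrt h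
    _ = |x 0| + |x 1| := Real.sqrt_sq (by positivity)

lemma li_of_det {u₁ u₂ : Fin 2 → ℤ} (h : u₁ 0 * u₂ 1 - u₁ 1 * u₂ 0 ≠ 0) :
    LinearIndependent ℝ ![vec u₁, vec u₂] := by
  rw [linearIndependent_fin2]
  constructor
  · show vec u₂ ≠ 0
    intro h0
    have e0 : ((u₂ 0 : ℝ)) = 0 := by rw [show ((u₂ 0:ℤ):ℝ) = vec u₂ 0 from rfl, h0]; rfl
    have e1 : ((u₂ 1 : ℝ)) = 0 := by rw [show ((u₂ 1:ℤ):ℝ) = vec u₂ 1 from rfl, h0]; rfl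
    have hz0 : u₂ 0 = 0 := by exact_mod_cast e0
    have hz1 : u₂ 1 = 0 := by exact_mod_cast e1
    apply h
    rw [hz0, hz1]; ring
  · intro a hEq
    show False
    have hEq' : a • vec u₂ = vec u₁ := by simpa using hEq
    have e0 : a * (u₂ 0 : ℝ) = (u₁ 0 : ℝ) := by rw [show a * (u₂ 0:ℝ) = (a • vec u₂) 0 from rfl, hEq']; rfl
    have e1 : a * (u₂ 1 : ℝ) = (u₁ 1 : ℝ) := by rw [show a * (u₂ 1:ℝ) = (a • vec u₂) 1 from rfl, hEq']; rfl
    have : ((u₁ 0 * u₂ 1 - u₁ 1 * u₂ 0 : ℤ) : ℝ) = 0 := by push_cast; rw [← e0, ← e1]; ring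
    exact h (by exact_mod_cast this)

lemma H_compact {r : ℝ} (hr1 : r ≤ 1) (hcl : IsClosed (H r)) : IsCompact (H r) := by
  apply Metric.isCompact_of_isClosed_isBounded hcl
  apply (Metric.isBounded_closedBall (x := (0:Plane)) (r := 4)).subset
  rintro x ⟨h1, h2, h3, h4⟩
  rw [mem_closedBall, dist_zero_right]
  have a0 : |x 0| ≤ 3 := abs_le.mpr ⟨by linarith, by linarith⟩
  have a1 : |x 1| ≤ 1/2 := abs_le.mpr ⟨h1, h2⟩
  calc ‖x‖ ≤ |x 0| + |x 1| := norm_le_coords x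
    _ ≤ 4 := by linarith

lemma ball_coords {x v : Plane} {ε : ℝ} (h : x ∈ closedBall v ε) (i : Fin 2) :
    |x i - v i| ≤ ε := le_trans (coord_dist x v i) (mem_closedBall.mp h)

lemma cone1 {r : ℝ} (hr0 : 0 ≤ r) :
    H r ∩ closedBall (pt 0 (-(1/2))) (1/2) =
    {x : Plane | ∃ t₁ t₂ : ℝ, 0 ≤ t₁ ∧ 0 ≤ t₂ ∧
      x = pt 0 (-(1/2)) + t₁ • vec ![1,0] + t₂ • vec ![0,1]} ∩ closedBall (pt 0 (-(1/2))) (1/2) := by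
  ext x
  constructor
  · rintro ⟨⟨h1, h2, h3, h4⟩, hB⟩
    refine ⟨⟨x 0, x 1 + 1/2, h3, by linarith, plane_eq ?_ ?_⟩, hB⟩
    · rw [comb_apply]; norm_num [pt, vec]
    · rw [comb_apply]; norm_num [pt, vec]
  · rintro ⟨⟨t₁, t₂, ht₁, ht₂, hxeq⟩, hB⟩
    have hx0 : x 0 = t₁ := by rw [hxeq, comb_apply]; norm_num [pt, vec]
    have hx1 : x 1 = -(1/2) + t₂ := by rw [hxeq, comb_apply]; norm_num [pt, vec]
    have b0 : |x 0 - 0| ≤ 1/2 := ball_coords hB 0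
    have b1 : |x 1 - -(1/2)| ≤ 1/2 := ball_coords hB 1
    rw [sub_zero, abs_le] at b0
    rw [abs_le] at b1
    exact ⟨⟨by linarith, by linarith, by linarith, by linarith⟩, hB⟩

lemma cone2 {r : ℝ} (hr0 : 0 < r) (hr1 : r ≤ 1) :
    H r ∩ closedBall (pt 0 (1/2)) (r/2) =
    {x : Plane | ∃ t₁ t₂ : ℝ, 0 ≤ t₁ ∧ 0 ≤ t₂ ∧
      x = pt 0 (1/2) + t₁ • vec ![1,0] + t₂ • vec ![0,-1]} ∩ closedBall (pt 0 (1/2)) (r/2) := by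
  ext x
  constructor
  · rintro ⟨⟨h1, h2, h3, h4⟩, hB⟩
    refine ⟨⟨x 0, 1/2 - x 1, h3, by linarith, plane_eq ?_ ?_⟩, hB⟩
    · rw [comb_apply]; norm_num [pt, vec]
    · rw [comb_apply]; norm_num [pt, vec]
  · rintro ⟨⟨t₁, t₂, ht₁, ht₂, hxeq⟩, hB⟩
    have hx0 : x 0 = t₁ := by rw [hxeq, comb_apply]; norm_num [pt, vec]
    have hx1 : x 1 = 1/2 - t₂ := by rw [hxeq, comb_apply]; norm_num [pt, vec]; ring
    have b0 : |x 0 - 0| ≤ r/2 := ball_coords hB 0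
    have b1 : |x 1 - 1/2| ≤ r/2 := ball_coords hB 1
    rw [sub_zero, abs_le] at b0
    rw [abs_le] at b1
    exact ⟨⟨by linarith, by linarith, by linarith, by linarith⟩, hB⟩

lemma cone3 {r : ℝ} (hr0 : 0 < r) (hr1 : r ≤ 1) :
    H r ∩ closedBall (pt r (1/2)) (r/2) =
    {x : Plane | ∃ t₁ t₂ : ℝ, 0 ≤ t₁ ∧ 0 ≤ t₂ ∧
      x = pt r (1/2) + t₁ • vec ![-1,0] + t₂ • vec ![2,-1]} ∩ closedBall (pt r (1/2)) (r/2) := by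
  ext x
  constructor
  · rintro ⟨⟨h1, h2, h3, h4⟩, hB⟩
    refine ⟨⟨r + 1 - 2 * x 1 - x 0, 1/2 - x 1, by linarith, by linarith, plane_eq ?_ ?_⟩, hB⟩
    · rw [comb_apply]; norm_num [pt, vec]; ring
    · rw [comb_apply]; norm_num [pt, vec]
  · rintro ⟨⟨t₁, t₂, ht₁, ht₂, hxeq⟩, hB⟩
    have hx0 : x 0 = r - t₁ + 2*t₂ := by rw [hxeq, comb_apply]; norm_num [pt, vec]; ring
    have hx1 : x 1 = 1/2 - t₂ := by rw [hxeq, comb_apply]; norm_num [pt, vec]; ring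
    have b0 : |x 0 - r| ≤ r/2 := ball_coords hB 0
    have b1 : |x 1 - 1/2| ≤ r/2 := ball_coords hB 1
    rw [abs_le] at b0 b1
    exact ⟨⟨by linarith, by linarith, by linarith, by linarith⟩, hB⟩

lemma cone4 {r : ℝ} (hr0 : 0 < r) (hr1 : r ≤ 1) :
    H r ∩ closedBall (pt (r+2) (-(1/2))) (1/2) =
    {x : Plane | ∃ t₁ t₂ : ℝ, 0 ≤ t₁ ∧ 0 ≤ t₂ ∧
      x = pt (r+2) (-(1/2)) + t₁ • vec ![-1,0] + t₂ • vec ![-2,1]} ∩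
      closedBall (pt (r+2) (-(1/2))) (1/2) := by
  ext x
  constructor
  · rintro ⟨⟨h1, h2, h3, h4⟩, hB⟩
    refine ⟨⟨r + 1 - 2 * x 1 - x 0, x 1 + 1/2, by linarith, by linarith, plane_eq ?_ ?_⟩, hB⟩
    · rw [comb_apply]; norm_num [pt, vec]; ring
    · rw [comb_apply]; norm_num [pt, vec]
  · rintro ⟨⟨t₁, t₂, ht₁, ht₂, hxeq⟩, hB⟩
    have hx0 : x 0 = r + 2 - t₁ - 2*t₂ := by rw [hxeq, comb_apply]; norm_num [pt, vec]; ring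
    have hx1 : x 1 = -(1/2) + t₂ := by rw [hxeq, comb_apply]; norm_num [pt, vec]
    have b0 : |x 0 - (r+2)| ≤ 1/2 := ball_coords hB 0
    have b1 : |x 1 - -(1/2)| ≤ 1/2 := ball_coords hB 1
    rw [abs_le] at b0 b1
    exact ⟨⟨by linarith, by linarith, by linarith, by linarith⟩, hB⟩

-- convex body equality from null symmetric difference
lemma convex_subset_of_null {A B : Set Plane} (hAc : Convex ℝ A)
    (hAi : (interior A).Nonempty) (hB : IsClosed B) (h : volume (A \ B) = 0) : A ⊆ B := by
  have hIntSub : interior A ⊆ B := by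
    intro x hx
    by_contra hxB
    have hopen : IsOpen (interior A ∩ Bᶜ) := isOpen_interior.inter hB.isOpen_compl
    obtain ⟨δ, hδ, hball⟩ := Metric.isOpen_iff.1 hopen x ⟨hx, hxB⟩
    have hsub : ball x δ ⊆ A \ B := fun y hy =>
      ⟨interior_subset (hball hy).1, (hball hy).2⟩
    have : volume (ball x δ) = 0 := measure_mono_null hsub h
    exact absurd this (Metric.measure_ball_pos volume x hδ).ne'
  intro x hxA
  obtain ⟨y, hy⟩ := hAi
  have hmem : ∀ n : ℕ, x + (1/(n+1:ℝ)) • (y - x) ∈ B := by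
    intro n
    apply hIntSub
    apply hAc.add_smul_mem_interior hxA (by simpa using hy)
    constructor
    · positivity
    · rw [div_le_one (by positivity)]; linarith [Nat.cast_nonneg (α := ℝ) n]
  have htend : Tendsto (fun n : ℕ => x + (1/(n+1:ℝ)) • (y - x)) atTop (nhds x) := by
    have h1 : Tendsto (fun n : ℕ => (1/(n+1:ℝ))) atTop (nhds 0) :=
      tendsto_one_div_add_atTop_nhds_zero_nat
    have h2 := (h1.smul_const (y - x)).const_add x
    simpa using h2
  exact hB.mem_of_tendsto htend (Filter.Eventually.of_forall hmem)

lemma convex_eq_of_null {A B : Set Plane} (hAc : Convex ℝ A) (hBc : Convex ℝ B)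
    (hAcl : IsClosed A) (hBcl : IsClosed B) (hAi : (interior A).Nonempty)
    (hBi : (interior B).Nonempty) (h : volume (symmDiff A B) = 0) : A = B := by
  have h1 : volume (A \ B) = 0 :=
    measure_mono_null (by rw [Set.symmDiff_def]; exact Set.subset_union_left) h
  have h2 : volume (B \ A) = 0 :=
    measure_mono_null (by rw [Set.symmDiff_def]; exact Set.subset_union_right) h
  exact le_antisymm (convex_subset_of_null hAc hAi hBcl h1)
    (convex_subset_of_null hBc hBi hAcl h2)

lemma delzant_interior_nonempty {Δ : Set Plane} (hc : Convex ℝ Δ) (hv : 0 < volume Δ) :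
    (interior Δ).Nonempty := by
  rw [hc.interior_nonempty_iff_affineSpan_eq_top]
  by_contra hne
  have h0 : volume Δ = 0 :=
    measure_mono_null (subset_affineSpan ℝ Δ) (Measure.addHaar_affineSubspace volume _ hne)
  exact absurd h0 hv.ne'

lemma vertex_extreme : pt 0 (1/2) ∈ (H 0).extremePoints ℝ := by
  rw [mem_extremePoints]
  constructor
  · refine ⟨?_, ?_, ?_, ?_⟩ <;> norm_num [pt, H]
  · rintro x₁ hx₁ x₂ hx₂ ⟨α, β, hα, hβ, hαβ, heq⟩
    have c1 : α * x₁ 1 + β * x₂ 1 = 1/2 := by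
      rw [show α * x₁ 1 + β * x₂ 1 = (α • x₁ + β • x₂) 1 from rfl, heq]; rfl
    have t1 : 0 ≤ α * (1/2 - x₁ 1) := mul_nonneg hα.le (by linarith [hx₁.2.1])
    have t2 : 0 ≤ β * (1/2 - x₂ 1) := mul_nonneg hβ.le (by linarith [hx₂.2.1])
    have tsum : α * (1/2 - x₁ 1) + β * (1/2 - x₂ 1) = 0 := by nlinarith
    have e1 : x₁ 1 = 1/2 := by
      rcases mul_eq_zero.mp (show α * (1/2 - x₁ 1) = 0 by linarith) with h | h
      · linarith
      · linarith
    have e2 : x₂ 1 = 1/2 := by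
      rcases mul_eq_zero.mp (show β * (1/2 - x₂ 1) = 0 by linarith) with h | h
      · linarith
      · linarith
    have f1 : x₁ 0 = 0 := by
      have h4 := hx₁.2.2.2; have h3 := hx₁.2.2.1
      rw [e1] at h4; linarith
    have f2 : x₂ 0 = 0 := by
      have h4 := hx₂.2.2.2; have h3 := hx₂.2.2.1
      rw [e2] at h4; linarith
    exact ⟨plane_eq (by rw [f1]; rfl) (by rw [e1]; rfl),
      plane_eq (by rw [f2]; rfl) (by rw [e2]; rfl)⟩

set_option maxHeartbeats 2000000 in
lemma not_delzant_H0 : ¬ IsDelzant (H 0) := by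
  rintro ⟨-, -, -, hcone⟩
  obtain ⟨u₁, u₂, -, hdet, ε, hε, hE⟩ := hcone _ vertex_extreme
  -- (A) both generators lie in the corner cone {p ≥ 0, p + 2q ≤ 0}
  have hu : ∀ u : Fin 2 → ℤ, (u = u₁ ∨ u = u₂) →
      0 ≤ (u 0 : ℝ) ∧ (u 0 : ℝ) + 2 * (u 1 : ℝ) ≤ 0 := by
    intro u huu
    set t := ε / (1 + |(u 0 : ℝ)| + |(u 1 : ℝ)|) with ht
    have habs0 := abs_nonneg (u 0 : ℝ)
    have habs1 := abs_nonneg (u 1 : ℝ)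
    have htpos : 0 < t := div_pos hε (by linarith)
    have hmem : pt 0 (1/2) + t • vec u ∈ {x : Plane | ∃ t₁ t₂ : ℝ, 0 ≤ t₁ ∧ 0 ≤ t₂ ∧
        x = pt 0 (1/2) + t₁ • vec u₁ + t₂ • vec u₂} := by
      rcases huu with rfl | rfl
      · exact ⟨t, 0, htpos.le, le_refl 0, by rw [zero_smul, add_zero]⟩
      · exact ⟨0, t, le_refl 0, htpos.le, by rw [zero_smul, add_zero]⟩
    have hball : pt 0 (1/2) + t • vec u ∈ closedBall (pt 0 (1/2)) ε := by
      rw [mem_closedBall, dist_self_add_left]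
      calc ‖t • vec u‖ ≤ |(t • vec u) 0| + |(t • vec u) 1| := norm_le_coords _
        _ = t * |(u 0 : ℝ)| + t * |(u 1 : ℝ)| := by
            rw [show (t • vec u) 0 = t * (u 0 : ℝ) from rfl,
              show (t • vec u) 1 = t * (u 1 : ℝ) from rfl, abs_mul, abs_mul,
              abs_of_pos htpos]
        _ ≤ ε := by
            have hne : (0:ℝ) < 1 + |(u 0 : ℝ)| + |(u 1 : ℝ)| := by linarith
            have hc : t * (1 + |(u 0 : ℝ)| + |(u 1 : ℝ)|) = ε := div_mul_cancel₀ _ hne.ne'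
            nlinarith
    have hH : pt 0 (1/2) + t • vec u ∈ H 0 := by
      have : pt 0 (1/2) + t • vec u ∈ H 0 ∩ closedBall (pt 0 (1/2)) ε := by
        rw [hE]; exact ⟨hmem, hball⟩
      exact this.1
    obtain ⟨-, -, hc3, hc4⟩ := hH
    have hc3' : (0:ℝ) ≤ 0 + t * (u 0 : ℝ) := hc3
    have hc4' : (0:ℝ) + t * (u 0 : ℝ) ≤ 0 + 1 - 2 * (1/2 + t * (u 1 : ℝ)) := hc4
    constructor
    · nlinarith
    · nlinarith
  -- (B),(C) the edge directions (0,-1) and (2,-1) lie in the cone of u₁,u₂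
  have hw : ∀ w0 w1 : ℝ, pt 0 (1/2) + pt w0 w1 ∈ H 0 →
      ‖pt w0 w1‖ ≤ ε → ∃ t₁ t₂ : ℝ, 0 ≤ t₁ ∧ 0 ≤ t₂ ∧
        w0 = t₁ * (u₁ 0 : ℝ) + t₂ * (u₂ 0 : ℝ) ∧ w1 = t₁ * (u₁ 1 : ℝ) + t₂ * (u₂ 1 : ℝ) := by
    intro w0 w1 hmem hnorm
    have hball : pt 0 (1/2) + pt w0 w1 ∈ closedBall (pt 0 (1/2)) ε := by
      rw [mem_closedBall, dist_self_add_left]; exact hnorm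
    have : pt 0 (1/2) + pt w0 w1 ∈ {x : Plane | ∃ t₁ t₂ : ℝ, 0 ≤ t₁ ∧ 0 ≤ t₂ ∧
        x = pt 0 (1/2) + t₁ • vec u₁ + t₂ • vec u₂} ∩ closedBall (pt 0 (1/2)) ε := by
      rw [← hE]; exact ⟨hmem, hball⟩
    obtain ⟨t₁, t₂, ht₁, ht₂, heq⟩ := this.1
    refine ⟨t₁, t₂, ht₁, ht₂, ?_, ?_⟩
    · have g0 : (0:ℝ) + w0 = 0 + t₁ * (u₁ 0 : ℝ) + t₂ * (u₂ 0 : ℝ) :=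
        congrArg (fun z : Plane => z 0) heq
      linarith
    · have g1 : (1/2:ℝ) + w1 = 1/2 + t₁ * (u₁ 1 : ℝ) + t₂ * (u₂ 1 : ℝ) :=
        congrArg (fun z : Plane => z 1) heq
      linarith
  -- apply to w = t•(0,-1) and w = t•(2,-1)
  set s := min ε 1 with hs
  have hspos : 0 < s := lt_min hε one_pos
  have hs1 : s ≤ 1 := min_le_right ε 1
  have hsε : s ≤ ε := min_le_left ε 1
  obtain ⟨a₁, a₂, ha₁, ha₂, ea0, ea1⟩ := hw 0 (-s)
    ⟨by show -(1/2) ≤ 1/2 + -s; linarith, by show 1/2 + -s ≤ 1/2; linarith,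
      by show (0:ℝ) ≤ 0 + 0; linarith, by show (0:ℝ) + 0 ≤ 0 + 1 - 2 * (1/2 + -s); linarith⟩
    (by calc ‖pt 0 (-s)‖ ≤ |pt 0 (-s) 0| + |pt 0 (-s) 1| := norm_le_coords _
          _ = s := by rw [show pt 0 (-s) 0 = (0:ℝ) from rfl, show pt 0 (-s) 1 = -s from rfl]
                      rw [abs_zero, abs_neg, abs_of_pos hspos]; ring
          _ ≤ ε := hsε)
  set s' := min (ε/3) 1 with hs'
  have hs'pos : 0 < s' := lt_min (by linarith) one_pos
  have hs'1 : s' ≤ 1 := min_le_right _ 1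
  have hs'ε : s' ≤ ε/3 := min_le_left _ 1
  obtain ⟨c₁, c₂, hc₁, hc₂, ec0, ec1⟩ := hw (2*s') (-s')
    ⟨by show -(1/2) ≤ 1/2 + -s'; linarith, by show 1/2 + -s' ≤ 1/2; linarith,
      by show (0:ℝ) ≤ 0 + 2*s'; linarith,
      by show (0:ℝ) + 2*s' ≤ 0 + 1 - 2 * (1/2 + -s'); linarith⟩
    (by calc ‖pt (2*s') (-s')‖ ≤ |pt (2*s') (-s') 0| + |pt (2*s') (-s') 1| := norm_le_coords _
          _ = 3 * s' := by
              rw [show pt (2*s') (-s') 0 = 2*s' from rfl, show pt (2*s') (-s') 1 = -s' from rfl]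
              rw [abs_neg, abs_of_pos hs'pos, abs_of_pos (by linarith : (0:ℝ) < 2*s')]; ring
          _ ≤ ε := by linarith)
  -- normalize coefficients
  obtain ⟨hP, hPQ⟩ := hu u₁ (Or.inl rfl)
  obtain ⟨hR, hRS⟩ := hu u₂ (Or.inr rfl)
  have ea0' : (a₁/s) * (u₁ 0 : ℝ) + (a₂/s) * (u₂ 0 : ℝ) = 0 := by
    field_simp; linarith
  have ea1' : (a₁/s) * (u₁ 1 : ℝ) + (a₂/s) * (u₂ 1 : ℝ) = -1 := by
    field_simp; linarith
  have ec0' : (c₁/s') * (u₁ 0 : ℝ) + (c₂/s') * (u₂ 0 : ℝ) = 2 := by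
    field_simp; linarith
  have ec1' : (c₁/s') * (u₁ 1 : ℝ) + (c₂/s') * (u₂ 1 : ℝ) = -1 := by
    field_simp; linarith
  set a := a₁/s with hadef
  set b := a₂/s with hbdef
  set c := c₁/s' with hcdef
  set d := c₂/s' with hddef
  have ha : 0 ≤ a := div_nonneg ha₁ hspos.le
  have hb : 0 ≤ b := div_nonneg ha₂ hspos.le
  have hc : 0 ≤ c := div_nonneg hc₁ hs'pos.le
  have hd : 0 ≤ d := div_nonneg hc₂ hs'pos.le
  -- final algebra
  have hprod1 : a * (u₁ 0 : ℝ) = 0 := by linarith [mul_nonneg ha hP, mul_nonneg hb hR]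
  have hprod2 : b * (u₂ 0 : ℝ) = 0 := by linarith [mul_nonneg ha hP, mul_nonneg hb hR]
  rcases mul_eq_zero.mp hprod1 with haz | hPz <;> rcases mul_eq_zero.mp hprod2 with hbz | hRz
  · -- a = 0, b = 0 : contradicts ea1'
    rw [haz, hbz] at ea1'; norm_num at ea1'
  · -- a = 0, u₂ 0 = 0
    have iR : u₂ 0 = 0 := by exact_mod_cast hRz
    -- b * S = -1 so S < 0
    have hbS : b * (u₂ 1 : ℝ) = -1 := by rw [haz] at ea1'; linarith
    have hSneg : (u₂ 1 : ℝ) < 0 := by nlinarith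
    have iS : u₂ 1 ≤ -1 := by
      have : (u₂ 1 : ℤ) < 0 := by exact_mod_cast hSneg
      omega
    have iP : 0 ≤ u₁ 0 := by exact_mod_cast hP
    -- det = u₁ 0 * u₂ 1
    have hdet' : u₁ 0 * u₂ 1 = 1 ∨ u₁ 0 * u₂ 1 = -1 := by
      rcases hdet with h | h <;> rw [iR] at h <;> [left; right] <;> linarith
    have ione : u₁ 0 = 1 ∧ u₂ 1 = -1 := by
      rcases hdet' with h | h
      · nlinarith
      · have h' : u₁ 0 * (-(u₂ 1)) = 1 := by linarith
        rcases Int.mul_eq_one_iff_eq_one_or_neg_one.mp h' with ⟨h1, h2⟩ | ⟨h1, h2⟩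
        · exact ⟨h1, by omega⟩
        · omega
    have iQ : u₁ 1 ≤ -1 := by
      have h2 : (u₁ 1 : ℝ) ≤ -1/2 := by rw [ione.1] at hPQ; push_cast at hPQ; linarith
      have h3 : (u₁ 1 : ℝ) < 0 := by linarith
      have h4 : (u₁ 1 : ℤ) < 0 := by exact_mod_cast h3
      omega
    -- now c * 1 + d * 0 = 2 and c * Q + d * (-1) = -1
    have hPr : (u₁ 0 : ℝ) = 1 := by exact_mod_cast ione.1
    have hSr : (u₂ 1 : ℝ) = -1 := by exact_mod_cast ione.2
    have hQr : (u₁ 1 : ℝ) ≤ -1 := by exact_mod_cast iQ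
    rw [hPr, hRz] at ec0'
    rw [hPr] at hPQ
    rw [hSr] at ec1'
    -- c = 2, then -1 = c * Q - d ≤ 2 * (-1) - d
    nlinarith
  · -- u₁ 0 = 0, b = 0
    have iP : u₁ 0 = 0 := by exact_mod_cast hPz
    have haQ : a * (u₁ 1 : ℝ) = -1 := by rw [hbz] at ea1'; linarith
    have hQneg : (u₁ 1 : ℝ) < 0 := by nlinarith
    have iQ : u₁ 1 ≤ -1 := by
      have : (u₁ 1 : ℤ) < 0 := by exact_mod_cast hQneg
      omega
    have iR : 0 ≤ u₂ 0 := by exact_mod_cast hR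
    have hdet' : (-(u₁ 1)) * u₂ 0 = 1 ∨ (-(u₁ 1)) * u₂ 0 = -1 := by
      rcases hdet with h | h <;> rw [iP] at h <;> [left; right] <;> linarith
    have ione : u₁ 1 = -1 ∧ u₂ 0 = 1 := by
      rcases hdet' with h | h
      · rcases Int.mul_eq_one_iff_eq_one_or_neg_one.mp h with ⟨h1, h2⟩ | ⟨h1, h2⟩
        · exact ⟨by omega, h2⟩
        · omega
      · nlinarith
    have iS : u₂ 1 ≤ -1 := by
      have hRr : (u₂ 0 : ℝ) = 1 := by exact_mod_cast ione.2
      rw [hRr] at hRS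
      have h2 : (u₂ 1 : ℝ) < 0 := by linarith
      have h4 : (u₂ 1 : ℤ) < 0 := by exact_mod_cast h2
      omega
    have hQr : (u₁ 1 : ℝ) = -1 := by exact_mod_cast ione.1
    have hRr : (u₂ 0 : ℝ) = 1 := by exact_mod_cast ione.2
    have hSr : (u₂ 1 : ℝ) ≤ -1 := by exact_mod_cast iS
    rw [hPz, hRr] at ec0'
    rw [hQr] at ec1'
    -- d = 2, -c + 2 * S = -1, c = 2S + 1 ≤ -1 < 0
    nlinarith
  · -- u₁ 0 = 0 and u₂ 0 = 0 : det = 0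
    have iP : u₁ 0 = 0 := by exact_mod_cast hPz
    have iR : u₂ 0 = 0 := by exact_mod_cast hRz
    rcases hdet with h | h <;> rw [iP, iR] at h <;> simp at h


lemma isDelzant_H {r : ℝ} (hr0 : 0 < r) (hr1 : r ≤ 1) : IsDelzant (H r) := by
  refine ⟨H_compact hr1 (H_closed r), H_convex r, H_vol_pos hr0.le, ?_⟩
  intro v hv
  rcases extreme_classify hr0 hv with ⟨e0, e1⟩ | ⟨e0, e1⟩ | ⟨e0, e1⟩ | ⟨e0, e1⟩
  · have hveq : v = pt 0 (-(1/2)) := plane_eq (by rw [e0]; rfl) (by rw [e1]; rfl)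
    exact ⟨![1,0], ![0,1], li_of_det (by decide), Or.inl (by decide), 1/2, by norm_num,
      by rw [hveq]; exact cone1 hr0.le⟩
  · have hveq : v = pt 0 (1/2) := plane_eq (by rw [e0]; rfl) (by rw [e1]; rfl)
    exact ⟨![1,0], ![0,-1], li_of_det (by decide), Or.inr (by decide), r/2, by positivity,
      by rw [hveq]; exact cone2 hr0 hr1⟩
  · have hveq : v = pt r (1/2) := plane_eq (by rw [e0]; rfl) (by rw [e1]; rfl)
    exact ⟨![-1,0], ![2,-1], li_of_det (by decide), Or.inl (by decide), r/2, by positivity,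
      by rw [hveq]; exact cone3 hr0 hr1⟩
  · have hveq : v = pt (r+2) (-(1/2)) := plane_eq (by rw [e0]; rfl) (by rw [e1]; rfl)
    exact ⟨![-1,0], ![-2,1], li_of_det (by decide), Or.inr (by decide), 1/2, by norm_num,
      by rw [hveq]; exact cone4 hr0 hr1⟩


/-- The space of Delzant polygons with the symmetric-difference metric is not complete:
the `Htrap n` are Delzant, form a Cauchy sequence, but have no Delzant limit. -/
theorem delzant_not_complete :
    (∀ n : ℕ, 1 ≤ n → IsDelzant (Htrap n)) ∧
    (∀ ε : ℝ, 0 < ε → ∃ N : ℕ, ∀ m n : ℕ, N ≤ m → N ≤ n →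
      volume (symmDiff (Htrap m) (Htrap n)) < ENNReal.ofReal ε) ∧
    ¬ ∃ Δ : Set Plane, IsDelzant Δ ∧
        Tendsto (fun n => volume (symmDiff (Htrap n) Δ)) atTop (nhds 0) := by
  refine ⟨?_, ?_, ?_⟩
  · -- (i) each Htrap n (n ≥ 1) is Delzant
    intro n hn
    rw [Htrap_eq]
    have h0 : (0:ℝ) < (n:ℝ) := by exact_mod_cast Nat.lt_of_lt_of_le Nat.zero_lt_one hn
    have hpos : (0:ℝ) < 1/(n:ℝ) := by positivity
    have hle : 1/(n:ℝ) ≤ 1 := by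
      rw [div_le_one h0]; exact_mod_cast hn
    exact isDelzant_H hpos hle
  · -- (ii) Cauchy
    intro ε hε
    obtain ⟨N, hN⟩ := exists_nat_one_div_lt hε
    have hNpos : (0:ℝ) < ((N:ℝ) + 1) := by positivity
    refine ⟨N+1, fun m n hm hn => ?_⟩
    have key : ∀ m n : ℕ, N+1 ≤ m → N+1 ≤ n → 1/(n:ℝ) ≤ 1/(m:ℝ) →
        volume (symmDiff (Htrap m) (Htrap n)) < ENNReal.ofReal ε := by
      intro m n hm hn hmn
      have hmpos : (0:ℝ) < (m:ℝ) := by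
        exact_mod_cast Nat.lt_of_lt_of_le (Nat.succ_pos N) hm
      have hnpos : (0:ℝ) < (n:ℝ) := by
        exact_mod_cast Nat.lt_of_lt_of_le (Nat.succ_pos N) hn
      have hmN : 1/(m:ℝ) ≤ 1/((N:ℝ)+1) := by
        apply one_div_le_one_div_of_le hNpos
        have : ((N+1:ℕ):ℝ) ≤ (m:ℝ) := by exact_mod_cast hm
        push_cast at this; linarith
      have hnn : 0 < 1/(n:ℝ) := by positivity
      calc volume (symmDiff (Htrap m) (Htrap n))
          ≤ ENNReal.ofReal (1/(m:ℝ) - 1/(n:ℝ)) := vol_symmDiff_le m n hmn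
        _ < ENNReal.ofReal ε := by
            rw [ENNReal.ofReal_lt_ofReal_iff hε]; linarith
    rcases le_total (1/(n:ℝ)) (1/(m:ℝ)) with h | h
    · exact key m n hm hn h
    · rw [symmDiff_comm]; exact key n m hn hm h
  · -- (iii) no Delzant limit
    rintro ⟨Δ, hΔ, htend⟩
    obtain ⟨hcomp, hconv, hvol, -⟩ := id hΔ
    have hzero : volume (symmDiff (Htrap 0) Δ) = 0 := by
      have hb : ∀ n : ℕ, volume (symmDiff (Htrap 0) Δ) ≤
          ENNReal.ofReal (1/(n:ℝ)) + volume (symmDiff (Htrap n) Δ) := by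
        intro n
        have step : volume (symmDiff (Htrap 0) (Htrap n)) ≤ ENNReal.ofReal (1/(n:ℝ)) := by
          rw [symmDiff_comm]
          have h0 : 1/((0:ℕ):ℝ) ≤ 1/((n:ℕ):ℝ) := by
            norm_num
          calc volume (symmDiff (Htrap n) (Htrap 0))
              ≤ ENNReal.ofReal (1/(n:ℝ) - 1/((0:ℕ):ℝ)) := vol_symmDiff_le n 0 h0
            _ = ENNReal.ofReal (1/(n:ℝ)) := by norm_num
        calc volume (symmDiff (Htrap 0) Δ)
            ≤ volume (symmDiff (Htrap 0) (Htrap n) ∪ symmDiff (Htrap n) Δ) :=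
              measure_mono (symmDiff_triangle _ _ _)
          _ ≤ volume (symmDiff (Htrap 0) (Htrap n)) + volume (symmDiff (Htrap n) Δ) :=
              measure_union_le _ _
          _ ≤ ENNReal.ofReal (1/(n:ℝ)) + volume (symmDiff (Htrap n) Δ) :=
              add_le_add_left step _
      have htend2 : Tendsto (fun n : ℕ => ENNReal.ofReal (1/(n:ℝ)) +
          volume (symmDiff (Htrap n) Δ)) atTop (nhds 0) := by
        have h1 : Tendsto (fun n : ℕ => ENNReal.ofReal (1/(n:ℝ))) atTop (nhds 0) := by
          have h2 := ENNReal.tendsto_ofReal (tendsto_one_div_atTop_nhds_zero_nat)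
          simpa using h2
        have h3 := h1.add htend
        simpa using h3
      exact le_antisymm (ge_of_tendsto htend2 (Filter.Eventually.of_forall hb)) zero_le
    have hieq : Htrap 0 = H 0 := by
      rw [Htrap_eq]; norm_num
    have hH0int : (interior (H 0)).Nonempty :=
      U_nonempty.mono (interior_maximal (U_sub le_rfl) U_open)
    have hΔint : (interior Δ).Nonempty := delzant_interior_nonempty hconv hvol
    have hEq : H 0 = Δ :=
      convex_eq_of_null (H_convex 0) hconv (H_closed 0) hcomp.isClosed hH0int hΔint
        (by rw [← hieq]; exact hzero)
    apply not_delzant_H0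
    rw [hEq]; exact hΔ
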